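/- For any continuous function f on [-1, 1], the substitution x = tanh((π/2)·sinh(t)) gives ∫_{-1}^{1} f(x) dx = ∫_{-∞}^{∞} f(tanh((π/2)·sinh(t))) · (π/2)·cosh(t)/cosh((π/2)·sinh(t))² dt. -/

import Mathlib

open Real MeasureTheory Set

lemma my_hasDerivAt_tanh (x : ℝ) :
    HasDerivAt Real.tanh (1 / Real.cosh x ^ 2) x := by
  have h : HasDerivAt (fun y => Real.sinh y / Real.cosh y)
      ((Real.cosh x * Real.cosh x - Real.sinh x * Real.sinh x) / Real.cosh x ^ 2) x :=
    (Real.hasDerivAt_sinh x).div (Real.hasDerivAt_cosh x) (Real.cosh_pos x).ne'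
  have e : (Real.cosh x * Real.cosh x - Real.sinh x * Real.sinh x) / Real.cosh x ^ 2
      = 1 / Real.cosh x ^ 2 := by
    rw [show Real.cosh x * Real.cosh x - Real.sinh x * Real.sinh x
        = Real.cosh x ^ 2 - Real.sinh x ^ 2 by ring, Real.cosh_sq_sub_sinh_sq]
  rw [← e]
  have hfun : Real.tanh = fun y => Real.sinh y / Real.cosh y :=
    funext Real.tanh_eq_sinh_div_cosh
  rw [hfun]
  exact h

lemma my_tanh_strictMono : StrictMono Real.tanh := by
  apply strictMono_of_deriv_pos
  intro x
  rw [(my_hasDerivAt_tanh x).deriv]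
  positivity

lemma my_tanh_mem_Ioo (x : ℝ) : Real.tanh x ∈ Set.Ioo (-1 : ℝ) 1 := by
  have hc := Real.cosh_pos x
  have h1 : Real.sinh x ^ 2 < Real.cosh x ^ 2 := by
    nlinarith [Real.cosh_sq_sub_sinh_sq x]
  have h2 : -Real.cosh x < Real.sinh x ∧ Real.sinh x < Real.cosh x := by
    constructor <;> nlinarith
  rw [Real.tanh_eq_sinh_div_cosh]
  constructor
  · rw [lt_div_iff₀ hc]; nlinarith [h2.1]
  · rw [div_lt_iff₀ hc]; nlinarith [h2.2]

lemma my_range_tanh : Set.range Real.tanh = Set.Ioo (-1 : ℝ) 1 := by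
  apply Set.Subset.antisymm
  · rintro _ ⟨x, rfl⟩; exact my_tanh_mem_Ioo x
  · rintro y ⟨hy1, hy2⟩
    set u : ℝ := Real.log ((1 + y) / (1 - y)) / 2 with hu
    refine ⟨u, ?_⟩
    have hc : (0 : ℝ) < (1 + y) / (1 - y) := by
      apply div_pos <;> linarith
    have ha : Real.exp u ^ 2 = (1 + y) / (1 - y) := by
      rw [sq, ← Real.exp_add, hu, show Real.log ((1 + y) / (1 - y)) / 2 +
        Real.log ((1 + y) / (1 - y)) / 2 = Real.log ((1 + y) / (1 - y)) by ring,
        Real.exp_log hc]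
    have hae : (0:ℝ) < Real.exp u := Real.exp_pos u
    rw [Real.tanh_eq_sinh_div_cosh, Real.sinh_eq, Real.cosh_eq, Real.exp_neg]
    rw [div_eq_iff (by positivity)]
    have hb : Real.exp u * Real.exp u * (1 - y) = 1 + y := by
      have h1y : (1:ℝ) - y ≠ 0 := by linarith
      field_simp at ha
      nlinarith [ha]
    field_simp
    nlinarith [hb, hae]

theorem tanh_sinh_substitution (f : ℝ → ℝ) (hf : ContinuousOn f (Set.Icc (-1 : ℝ) 1)) :
    ∫ x in (-1 : ℝ)..1, f x =
      ∫ t : ℝ, f (Real.tanh (π / 2 * Real.sinh t)) *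
        (π / 2 * Real.cosh t / (Real.cosh (π / 2 * Real.sinh t)) ^ 2) := by
  set φ : ℝ → ℝ := fun t => Real.tanh (π / 2 * Real.sinh t) with hφ
  set φ' : ℝ → ℝ := fun t => π / 2 * Real.cosh t / (Real.cosh (π / 2 * Real.sinh t)) ^ 2
    with hφ'
  have hpi : (0:ℝ) < π / 2 := by positivity
  have hderiv : ∀ t, HasDerivAt φ (φ' t) t := by
    intro t
    have h1 : HasDerivAt (fun t : ℝ => π / 2 * Real.sinh t) (π / 2 * Real.cosh t) t :=
      (Real.hasDerivAt_sinh t).const_mul (π / 2)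
    have h2 : HasDerivAt φ (1 / Real.cosh (π / 2 * Real.sinh t) ^ 2 * (π / 2 * Real.cosh t)) t :=
      by have := (my_hasDerivAt_tanh (π / 2 * Real.sinh t)).comp t h1; exact this
    convert h2 using 1
    simp [hφ']
    ring
  have hmono : StrictMono φ := by
    intro a b hab
    exact my_tanh_strictMono (by nlinarith [Real.sinh_strictMono hab])
  have himage : φ '' Set.univ = Set.Ioo (-1 : ℝ) 1 := by
    rw [Set.image_univ, ← my_range_tanh]
    apply Set.Subset.antisymm
    · rintro _ ⟨t, rfl⟩; exact ⟨π / 2 * Real.sinh t, rfl⟩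
    · rintro _ ⟨x, rfl⟩
      obtain ⟨t, ht⟩ := Real.sinh_surjective (x / (π / 2))
      exact ⟨t, by rw [hφ]; simp only []; rw [ht]; rw [mul_div_cancel₀]; exact hpi.ne'⟩
  have key := integral_image_eq_integral_abs_deriv_smul MeasurableSet.univ
    (fun x _ => (hderiv x).hasDerivWithinAt) hmono.injective.injOn f
  rw [himage] at key
  have hpos : ∀ t, 0 < φ' t := by
    intro t
    have := Real.cosh_pos t
    have := Real.cosh_pos (π / 2 * Real.sinh t)
    positivity
  rw [intervalIntegral.integral_of_le (by norm_num : (-1:ℝ) ≤ 1),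
    MeasureTheory.integral_Ioc_eq_integral_Ioo, key, Measure.restrict_univ]
  congr 1
  ext t
  rw [abs_of_pos (hpos t), smul_eq_mul, mul_comm]
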